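/- arXiv:1703.07494 — 2 statements merged into one kernel-verified Lean document; each statement's English description precedes it below -/
import Mathlib

section
/- Weak duality bound: if (v, w) is feasible for the dual LP (D) and μ₀ is the measure of initial conditions whose trajectories reach X_T × Θ at time T, then ⟨λ_x ⊗ λ_θ, w⟩ ≥ μ₀(X × Θ). In particular any dual feasible w satisfies ∫ w d(λ_x ⊗ λ_θ) ≥ (λ_x ⊗ λ_θ)(S), where S is the set of successful initial conditions. -/
open MeasureTheory

/-- Weak duality: if (v,w) is feasible for the dual LP (D), then the Lebesgue
pairing ⟨λ_x ⊗ λ_θ, w⟩ bounds from above the Lebesgue measure of the set S of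
successful initial conditions (those whose trajectories reach X_T at time T
while remaining in X). -/
theorem weak_duality_dual_LP {n m : ℕ}
    (T : ℝ) (hT : 0 < T)
    (f : EuclideanSpace ℝ (Fin n) → EuclideanSpace ℝ (Fin m) →
      EuclideanSpace ℝ (Fin n))
    (X : Set (EuclideanSpace ℝ (Fin n))) (hX : IsCompact X)
    (hXmeas : MeasurableSet X)
    (Θ : Set (EuclideanSpace ℝ (Fin m))) (hΘ : IsCompact Θ)
    (hΘmeas : MeasurableSet Θ)
    (XT : Set (EuclideanSpace ℝ (Fin n))) (hXT : XT ⊆ X)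
    -- trajectories: γ x₀ θ solves ẋ = f(x,θ), starts at x₀, remains in X
    (γ : EuclideanSpace ℝ (Fin n) → EuclideanSpace ℝ (Fin m) → ℝ →
      EuclideanSpace ℝ (Fin n))
    (hγ0 : ∀ x₀ θ, γ x₀ θ 0 = x₀)
    (hγ' : ∀ x₀ θ t, HasDerivAt (γ x₀ θ) (f (γ x₀ θ t) θ) t)
    (hγX : ∀ x₀ ∈ X, ∀ θ ∈ Θ, ∀ t ∈ Set.Icc (0 : ℝ) T, γ x₀ θ t ∈ X)
    -- S: successful initial conditions
    (S : Set (EuclideanSpace ℝ (Fin n) × EuclideanSpace ℝ (Fin m)))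
    (hS : S = {p | p.1 ∈ X ∧ p.2 ∈ Θ ∧ γ p.1 p.2 T ∈ XT})
    (hSmeas : MeasurableSet S)
    -- dual feasibility of (v, w)
    (v : ℝ × EuclideanSpace ℝ (Fin n) × EuclideanSpace ℝ (Fin m) → ℝ)
    (hv : ContDiff ℝ 1 v)
    (w : EuclideanSpace ℝ (Fin n) × EuclideanSpace ℝ (Fin m) → ℝ)
    (hw : Continuous w)
    (hLf : ∀ t ∈ Set.Icc (0 : ℝ) T, ∀ x ∈ X, ∀ θ ∈ Θ,
      fderiv ℝ v (t, x, θ) (1, f x θ, 0) ≤ 0)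
    (hw0 : ∀ x ∈ X, ∀ θ ∈ Θ, 0 ≤ w (x, θ))
    (hwv : ∀ x ∈ X, ∀ θ ∈ Θ, 1 ≤ w (x, θ) - v (0, x, θ))
    (hvT : ∀ x ∈ XT, ∀ θ ∈ Θ, 0 ≤ v (T, x, θ)) :
    (volume S).toReal ≤ ∫ p in X ×ˢ Θ, w p := by
  -- key pointwise bound: w ≥ 1 on S
  have hSsub : S ⊆ X ×ˢ Θ := by
    rw [hS]; rintro ⟨x, θ⟩ ⟨hx, hθ, _⟩; exact ⟨hx, hθ⟩
  have key : ∀ p ∈ S, (1 : ℝ) ≤ w p := by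
    rintro ⟨x₀, θ⟩ hp
    rw [hS] at hp
    obtain ⟨hx0, hθ, hxT⟩ := hp
    set g : ℝ → ℝ := fun t => v (t, γ x₀ θ t, θ) with hg
    have hgderiv : ∀ t : ℝ, HasDerivAt g
        (fderiv ℝ v (t, γ x₀ θ t, θ) (1, f (γ x₀ θ t) θ, 0)) t := by
      intro t
      have hcurve : HasDerivAt (fun s : ℝ => ((s, γ x₀ θ s, θ) :
          ℝ × EuclideanSpace ℝ (Fin n) × EuclideanSpace ℝ (Fin m)))
          (1, f (γ x₀ θ t) θ, 0) t :=
        HasDerivAt.prodMk (hasDerivAt_id t) ((hγ' x₀ θ t).prodMk (hasDerivAt_const t θ))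
      exact ((hv.differentiable one_ne_zero _).hasFDerivAt).comp_hasDerivAt t hcurve
    have hanti : AntitoneOn g (Set.Icc 0 T) := by
      apply antitoneOn_of_deriv_nonpos (convex_Icc 0 T)
      · exact fun t _ => ((hgderiv t).differentiableAt).continuousAt.continuousWithinAt
      · intro t ht
        exact ((hgderiv t).differentiableAt).differentiableWithinAt
      · intro t ht
        rw [(hgderiv t).deriv]
        have ht' : t ∈ Set.Icc (0 : ℝ) T := interior_subset ht
        exact hLf t ht' _ (hγX x₀ hx0 θ hθ t ht') θ hθ
    have h0T : g T ≤ g 0 :=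
      hanti (Set.left_mem_Icc.2 hT.le) (Set.right_mem_Icc.2 hT.le) hT.le
    have hvT' : 0 ≤ g T := hvT _ hxT θ hθ
    have h1 : 1 ≤ w (x₀, θ) - v (0, x₀, θ) := hwv x₀ hx0 θ hθ
    have : v (0, x₀, θ) = g 0 := by simp [hg, hγ0]
    linarith [h0T, hvT', h1, this]
  -- measure-theoretic part
  have hvolS : volume S < ⊤ :=
    lt_of_le_of_lt (measure_mono hSsub) (hX.prod hΘ).measure_lt_top
  have hind : IntegrableOn (Set.indicator S (fun _ => (1 : ℝ))) (X ×ˢ Θ) volume := by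
    apply Integrable.indicator _ hSmeas
    exact integrableOn_const (hX.prod hΘ).measure_lt_top.ne
  have hwInt : IntegrableOn w (X ×ˢ Θ) volume :=
    hw.continuousOn.integrableOn_compact (hX.prod hΘ)
  have heq : (volume S).toReal
      = ∫ p in X ×ˢ Θ, Set.indicator S (fun _ => (1 : ℝ)) p := by
    rw [setIntegral_indicator hSmeas, Set.inter_eq_self_of_subset_right hSsub]
    simp
    rfl
  rw [heq]
  apply setIntegral_mono_on hind hwInt (hXmeas.prod hΘmeas)
  intro p hp
  by_cases hpS : p ∈ S
  · simp only [Set.indicator_of_mem hpS]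
    exact key p hpS
  · simp only [Set.indicator_of_notMem hpS]
    exact hw0 p.1 hp.1 p.2 hp.2
end

section
/- If (v, w) is dual feasible, then w(x₀, θ) ≥ 1 for every (x₀, θ) such that the trajectory of ẋ = f(x,θ) from x₀ reaches X_T at time T while staying in X; i.e., the 1-superlevel set {w ≥ 1} contains the uncertain backwards reachable set. -/
open MeasureTheory

/-- If (v,w) is dual feasible, then w(x₀,θ) ≥ 1 for every (x₀,θ) whose
trajectory of ẋ = f(x,θ) from x₀ reaches X_T at time T while staying in X:
the 1-superlevel set of w contains the uncertain backwards reachable set. -/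
theorem dual_feasible_superlevel_contains_BRS {n m : ℕ}
    (T : ℝ) (hT : 0 < T)
    (f : EuclideanSpace ℝ (Fin n) → EuclideanSpace ℝ (Fin m) →
      EuclideanSpace ℝ (Fin n)) (hf : Continuous fun p : _ × _ => f p.1 p.2)
    (X : Set (EuclideanSpace ℝ (Fin n))) (Θ : Set (EuclideanSpace ℝ (Fin m)))
    (XT : Set (EuclideanSpace ℝ (Fin n))) (hXT : XT ⊆ X)
    (v : ℝ × EuclideanSpace ℝ (Fin n) × EuclideanSpace ℝ (Fin m) → ℝ)
    (hv : ContDiff ℝ 1 v)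
    (w : EuclideanSpace ℝ (Fin n) × EuclideanSpace ℝ (Fin m) → ℝ)
    (hLf : ∀ t ∈ Set.Icc (0 : ℝ) T, ∀ x ∈ X, ∀ θ ∈ Θ,
      fderiv ℝ v (t, x, θ) (1, f x θ, 0) ≤ 0)
    (hvT : ∀ x ∈ XT, ∀ θ ∈ Θ, 0 ≤ v (T, x, θ))
    (hwv : ∀ x ∈ X, ∀ θ ∈ Θ, v (0, x, θ) + 1 ≤ w (x, θ))
    (x₀ : EuclideanSpace ℝ (Fin n)) (hx₀ : x₀ ∈ X)
    (θ : EuclideanSpace ℝ (Fin m)) (hθ : θ ∈ Θ)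
    (γ : ℝ → EuclideanSpace ℝ (Fin n))
    (hγ0 : γ 0 = x₀)
    (hγ' : ∀ t ∈ Set.Icc (0 : ℝ) T, HasDerivAt γ (f (γ t) θ) t)
    (hγX : ∀ t ∈ Set.Icc (0 : ℝ) T, γ t ∈ X)
    (hγT : γ T ∈ XT) :
    1 ≤ w (x₀, θ) := by
  set g : ℝ → ℝ := fun t => v (t, γ t, θ) with hg_def
  have hg : ∀ t ∈ Set.Icc (0 : ℝ) T,
      HasDerivAt g (fderiv ℝ v (t, γ t, θ) (1, f (γ t) θ, 0)) t := by
    intro t ht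
    have hcurve : HasDerivAt (fun s : ℝ => ((s, γ s, θ) :
        ℝ × EuclideanSpace ℝ (Fin n) × EuclideanSpace ℝ (Fin m)))
        (1, f (γ t) θ, 0) t := by
      exact HasDerivAt.prodMk (hasDerivAt_id t) (HasDerivAt.prodMk (hγ' t ht) (hasDerivAt_const t θ))
    have hvd : HasFDerivAt v (fderiv ℝ v (t, γ t, θ)) (t, γ t, θ) :=
      (hv.differentiable one_ne_zero (t, γ t, θ)).hasFDerivAt
    exact hvd.comp_hasDerivAt t hcurve
  have hanti : AntitoneOn g (Set.Icc 0 T) := by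
    apply antitoneOn_of_deriv_nonpos (convex_Icc 0 T)
    · exact fun t ht => ((hg t ht).continuousAt).continuousWithinAt
    · intro t ht
      rw [interior_Icc] at ht
      exact ((hg t (Set.mem_Icc_of_Ioo ht)).differentiableAt).differentiableWithinAt
    · intro t ht
      rw [interior_Icc] at ht
      have ht' := Set.mem_Icc_of_Ioo ht
      rw [(hg t ht').deriv]
      exact hLf t ht' (γ t) (hγX t ht') θ hθ
  have h0T : g T ≤ g 0 :=
    hanti (Set.left_mem_Icc.2 hT.le) (Set.right_mem_Icc.2 hT.le) hT.le
  have hgT : 0 ≤ g T := hvT (γ T) hγT θ hθ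
  have : 0 ≤ v (0, x₀, θ) := by
    have := hgT.trans h0T
    simpa [hg_def, hγ0] using this
  have := hwv x₀ hx₀ θ hθ
  linarith
end
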